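/- Let q ≥ 5 be a prime. If H is a proper subgroup of PSL(2,q) whose index |PSL(2,q):H| is odd, then q divides |PSL(2,q):H|. (Claim from the proof of Lemma 3.2, derived from Dickson's classification of the subgroups of PSL(2,q)) -/

import Mathlib

/-- The projective special linear group `PSL(2,q)`: the quotient of `SL(2, ZMod q)`
by its center. -/
abbrev PSL (q : ℕ) : Type :=
  Matrix.SpecialLinearGroup (Fin 2) (ZMod q) ⧸
    Subgroup.center (Matrix.SpecialLinearGroup (Fin 2) (ZMod q))

/-- The projective general linear group `PGL(2,q)`: the quotient of `GL(2, ZMod q)`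
by its center. -/
abbrev PGL (q : ℕ) : Type :=
  Matrix.GeneralLinearGroup (Fin 2) (ZMod q) ⧸
    Subgroup.center (Matrix.GeneralLinearGroup (Fin 2) (ZMod q))

/-- The socle of `PGL(2,q)`: the image of `SL(2, ZMod q)` under the natural map
`SL(2, ZMod q) → GL(2, ZMod q) → PGL(2,q)`. -/
noncomputable def socPGL (q : ℕ) : Subgroup (PGL q) :=
  ((QuotientGroup.mk' (Subgroup.center (Matrix.GeneralLinearGroup (Fin 2) (ZMod q)))).comp
    (Matrix.SpecialLinearGroup.toGL)).range


open Matrix Subgroup Pointwise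

namespace QAux

variable (q : ℕ) [Fact (Nat.Prime q)]

local notation "SL2" => Matrix.SpecialLinearGroup (Fin 2) (ZMod q)
local notation "M2" => Matrix (Fin 2) (Fin 2) (ZMod q)
local notation "GL2" => Matrix.GeneralLinearGroup (Fin 2) (ZMod q)

instance : NeZero q := ⟨(Fact.out (p := q.Prime)).ne_zero⟩

def E (c : ZMod q) : SL2 := ⟨!![1, c; 0, 1], by simp [Matrix.det_fin_two_of]⟩
def Fl (c : ZMod q) : SL2 := ⟨!![1, 0; c, 1], by simp [Matrix.det_fin_two_of]⟩

lemma E_coe (c : ZMod q) : (E q c : M2) = !![1, c; 0, 1] := rfl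
lemma Fl_coe (c : ZMod q) : (Fl q c : M2) = !![1, 0; c, 1] := rfl

lemma E_mul_E (a b : ZMod q) : E q a * E q b = E q (a + b) := by
  apply Subtype.ext
  show (E q a : M2) * (E q b : M2) = _
  rw [E_coe, E_coe, Matrix.mul_fin_two, E_coe]
  norm_num [add_comm]

lemma Fl_mul_Fl (a b : ZMod q) : Fl q a * Fl q b = Fl q (a + b) := by
  apply Subtype.ext
  show (Fl q a : M2) * (Fl q b : M2) = _
  rw [Fl_coe, Fl_coe, Matrix.mul_fin_two, Fl_coe]
  norm_num [add_comm]

lemma E_zero : E q 0 = 1 := by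
  apply Subtype.ext
  rw [Matrix.SpecialLinearGroup.coe_one, E_coe, Matrix.one_fin_two]

lemma Fl_zero : Fl q 0 = 1 := by
  apply Subtype.ext
  rw [Matrix.SpecialLinearGroup.coe_one, Fl_coe, Matrix.one_fin_two]

lemma E_pow (n : ℕ) : (E q 1) ^ n = E q n := by
  induction n with
  | zero => simpa using (E_zero q).symm
  | succ k ih => rw [pow_succ, ih, E_mul_E]; push_cast; ring_nf

lemma closure_EF :
    Subgroup.closure (Set.range (E q) ∪ Set.range (Fl q)) = ⊤ := by
  set C := Subgroup.closure (Set.range (E q) ∪ Set.range (Fl q)) with hC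
  rw [eq_top_iff']
  have hE : ∀ c, E q c ∈ C := fun c => subset_closure (Or.inl ⟨c, rfl⟩)
  have hF : ∀ c, Fl q c ∈ C := fun c => subset_closure (Or.inr ⟨c, rfl⟩)
  have key : ∀ x : SL2, (x : M2) 1 0 ≠ 0 → x ∈ C := by
    intro x hx
    set a := (x : M2) 0 0 with ha
    set b := (x : M2) 0 1 with hb
    set c := (x : M2) 1 0 with hc
    set d := (x : M2) 1 1 with hd
    have hdet : a * d - b * c = 1 := by
      rw [ha, hb, hc, hd, ← Matrix.det_fin_two]; exact x.2
    have hxeq : x = E q ((a - 1) * c⁻¹) * Fl q c * E q ((d - 1) * c⁻¹) := by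
      apply Subtype.ext
      show (x : M2) = ((E q _ : M2) * (Fl q _ : M2)) * (E q _ : M2)
      rw [E_coe, Fl_coe, E_coe, Matrix.mul_fin_two, Matrix.mul_fin_two,
        Matrix.eta_fin_two (x : M2), ← ha, ← hb, ← hc, ← hd]
      ext i j
      fin_cases i <;> fin_cases j <;>
        simp only [Matrix.cons_val', Matrix.cons_val_zero, Matrix.cons_val_one,
          Matrix.head_cons, Matrix.empty_val', Matrix.cons_val_fin_one, Matrix.head_fin_const,
          Matrix.of_apply, Fin.isValue, Matrix.cons_val_fin_one, Fin.zero_eta, Fin.mk_one] <;>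
        field_simp <;>
        first
          | linear_combination -hdet
          | linear_combination hdet
          | ring
    rw [hxeq]
    exact mul_mem (mul_mem (hE _) (hF _)) (hE _)
  intro x
  by_cases hcz : (x : M2) 1 0 ≠ 0
  · exact key x hcz
  · push_neg at hcz
    have hd : ((x * Fl q 1 : SL2) : M2) 1 0 ≠ 0 := by
      have hdet : (x : M2) 0 0 * (x : M2) 1 1 - (x : M2) 0 1 * (x : M2) 1 0 = 1 := by
        rw [← Matrix.det_fin_two]; exact x.2
      have hco : ((x * Fl q 1 : SL2) : M2) = (x : M2) * (Fl q 1 : M2) := rfl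
      have hval : ((x * Fl q 1 : SL2) : M2) 1 0 = (x : M2) 1 0 + (x : M2) 1 1 := by
        rw [hco, Fl_coe, Matrix.mul_apply, Fin.sum_univ_two]
        simp
      rw [hval, hcz, zero_add]
      intro h
      rw [hcz, h] at hdet
      simp at hdet
    have hxe : x = (x * Fl q 1) * Fl q (-1) := by
      rw [mul_assoc, Fl_mul_Fl]
      simp [Fl_zero]
    rw [hxe]
    exact mul_mem (key _ hd) (hF _)


lemma det_surj : Function.Surjective (Matrix.GeneralLinearGroup.det (n := Fin 2) (R := ZMod q)) := by
  intro u
  have hdet : Matrix.det !![(u : ZMod q), 0; 0, 1] ≠ 0 := by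
    rw [Matrix.det_fin_two_of]
    simpa using u.ne_zero
  refine ⟨Matrix.GeneralLinearGroup.mkOfDetNeZero _ hdet, ?_⟩
  apply Units.ext
  rw [Matrix.GeneralLinearGroup.val_det_apply]
  show Matrix.det !![(u : ZMod q), 0; 0, 1] = (u : ZMod q)
  rw [Matrix.det_fin_two_of]
  ring

noncomputable def slEquivKer : SL2 ≃ (Matrix.GeneralLinearGroup.det (n := Fin 2) (R := ZMod q)).ker where
  toFun x := ⟨Matrix.SpecialLinearGroup.toGL x, by
    rw [MonoidHom.mem_ker]
    apply Units.ext
    rw [Matrix.GeneralLinearGroup.val_det_apply]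
    exact x.2⟩
  invFun y := ⟨(y : GL2).val, by
    have := y.2
    rw [MonoidHom.mem_ker] at this
    have := congrArg Units.val this
    rwa [Matrix.GeneralLinearGroup.val_det_apply] at this⟩
  left_inv x := rfl
  right_inv y := by
    apply Subtype.ext
    apply Units.ext
    rfl

lemma card_SL : Nat.card SL2 = q ^ 3 - q := by
  have h2 : 2 ≤ q := (Fact.out (p := q.Prime)).two_le
  have hGL : Nat.card GL2 = (q ^ 2 - 1) * (q ^ 2 - q) := by
    rw [Matrix.card_GL_field, Fin.prod_univ_two]
    simp [ZMod.card]
  have hker := Subgroup.card_eq_card_quotient_mul_card_subgroup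
    (Matrix.GeneralLinearGroup.det (n := Fin 2) (R := ZMod q)).ker
  rw [Nat.card_congr (QuotientGroup.quotientKerEquivRange _).toEquiv] at hker
  rw [MonoidHom.range_eq_top_of_surjective _ (det_surj q)] at hker
  rw [← Nat.card_congr (slEquivKer q)] at hker
  have hunits : Nat.card ((⊤ : Subgroup (ZMod q)ˣ)) = q - 1 := by
    rw [Nat.card_congr Subgroup.topEquiv.toEquiv, Nat.card_eq_fintype_card, ZMod.card_units]
  rw [hGL, hunits] at hker
  have key : (q ^ 2 - 1) * (q ^ 2 - q) = (q - 1) * (q ^ 3 - q) := by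
    have h1 : 1 ≤ q := by omega
    have h2' : q ≤ q ^ 2 := by nlinarith
    have h3 : 1 ≤ q ^ 2 := by nlinarith
    have h4 : q ≤ q ^ 3 := by nlinarith
    zify [h1, h2', h3, h4]
    ring
  rw [key] at hker
  have hq1 : 0 < q - 1 := by omega
  exact (Nat.eq_of_mul_eq_mul_left hq1 hker.symm)

lemma card_center (hq2 : q ≠ 2) :
    Nat.card (Subgroup.center SL2) = 2 := by
  have e := Matrix.SpecialLinearGroup.center_equiv_rootsOfUnity' (R := ZMod q) (0 : Fin 2)
  rw [Nat.card_congr e.toEquiv]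
  have hpr : IsPrimitiveRoot (-1 : ZMod q) 2 := IsPrimitiveRoot.neg_one q hq2
  have := hpr.card_rootsOfUnity (R := ZMod q)
  rw [Fintype.card_fin]
  simpa using this

lemma card_PSL (hq2 : q ≠ 2) : Nat.card (PSL q) * 2 = q ^ 3 - q := by
  have := Subgroup.card_eq_card_quotient_mul_card_subgroup (Subgroup.center SL2)
  rw [card_SL q, card_center q hq2] at this
  exact this.symm


lemma Fl_pow (n : ℕ) : (Fl q 1) ^ n = Fl q n := by
  induction n with
  | zero => simpa using (Fl_zero q).symm
  | succ k ih => rw [pow_succ, ih, Fl_mul_Fl]; push_cast; ring_nf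

lemma center_od {z : SL2} (hz : z ∈ Subgroup.center SL2) :
    (z : M2) 0 1 = 0 ∧ (z : M2) 1 0 = 0 := by
  have h := Matrix.SpecialLinearGroup.scalar_eq_self_of_mem_center hz 0
  constructor <;> · rw [← h]; simp [Matrix.scalar_apply, Matrix.diagonal_apply_ne]

/-- the natural projection -/
def mk : SL2 →* PSL q := QuotientGroup.mk' (Subgroup.center SL2)

lemma mk_surj : Function.Surjective (mk q) := QuotientGroup.mk'_surjective _

lemma orderOf_mkE : orderOf (mk q (E q 1)) = q := by
  have h1 : (mk q (E q 1)) ^ q = 1 := by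
    rw [← map_pow, E_pow]
    rw [show ((q : ZMod q)) = 0 from ZMod.natCast_self q, E_zero, _root_.map_one]
  have h2 : mk q (E q 1) ≠ 1 := by
    intro h
    rw [mk] at h
    have h' : E q 1 ∈ Subgroup.center SL2 := (QuotientGroup.eq_one_iff _).mp h
    have := (center_od q h').1
    rw [E_coe] at this
    simp at this
  exact orderOf_eq_prime h1 h2

lemma orderOf_mkF : orderOf (mk q (Fl q 1)) = q := by
  have h1 : (mk q (Fl q 1)) ^ q = 1 := by
    rw [← map_pow, Fl_pow]
    rw [show ((q : ZMod q)) = 0 from ZMod.natCast_self q, Fl_zero, _root_.map_one]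
  have h2 : mk q (Fl q 1) ≠ 1 := by
    intro h
    rw [mk] at h
    have h' : Fl q 1 ∈ Subgroup.center SL2 := (QuotientGroup.eq_one_iff _).mp h
    have := (center_od q h').2
    rw [Fl_coe] at this
    simp at this
  exact orderOf_eq_prime h1 h2

lemma card_U : Nat.card (Subgroup.zpowers (mk q (E q 1))) = q := by
  rw [Nat.card_zpowers, orderOf_mkE]

lemma card_L : Nat.card (Subgroup.zpowers (mk q (Fl q 1))) = q := by
  rw [Nat.card_zpowers, orderOf_mkF]

lemma U_ne_L : Subgroup.zpowers (mk q (E q 1)) ≠ Subgroup.zpowers (mk q (Fl q 1)) := by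
  intro h
  have hl : mk q (Fl q 1) ∈ Subgroup.zpowers (mk q (E q 1)) := h ▸ Subgroup.mem_zpowers _
  rw [← mem_powers_iff_mem_zpowers] at hl
  obtain ⟨n, hn'⟩ := hl
  have hn : (mk q) (E q 1) ^ n = (mk q) (Fl q 1) := hn'
  rw [← map_pow, E_pow] at hn
  rw [mk, QuotientGroup.mk'_eq_mk'] at hn
  obtain ⟨z, hz, hzeq⟩ := hn
  have : ((E q (n : ZMod q) * z : SL2) : M2) 1 0 = ((Fl q 1 : SL2) : M2) 1 0 := by rw [hzeq]
  rw [Matrix.SpecialLinearGroup.coe_mul, Matrix.mul_apply, Fin.sum_univ_two, E_coe, Fl_coe] at this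
  have hz10 := (center_od q hz).2
  simp [hz10] at this

lemma exists_m (hq5 : 5 ≤ q) :
    ∃ m : ℕ, Nat.card (PSL q) = q * m ∧ 2 * m = q ^ 2 - 1 ∧ ¬ q ∣ m ∧ m ≠ 0 := by
  have hq2 : q ≠ 2 := by omega
  have hodd : Odd q := (Fact.out (p := q.Prime)).odd_of_ne_two hq2
  have hodd2 : Odd (q ^ 2) := hodd.pow
  obtain ⟨m, hm⟩ : ∃ m, q ^ 2 - 1 = 2 * m := by
    obtain ⟨j, hj⟩ := hodd2
    exact ⟨j, by omega⟩
  have hq1 : 5 ≤ q ^ 2 := by nlinarith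
  refine ⟨m, ?_, hm.symm, ?_, ?_⟩
  · have hcard := card_PSL q hq2
    have h3 : q ^ 3 - q = q * (q ^ 2 - 1) := by
      zify [show 1 ≤ q ^ 2 by nlinarith, show q ≤ q ^ 3 by nlinarith]
      ring
    rw [h3, hm] at hcard
    have : Nat.card (PSL q) * 2 = (q * m) * 2 := by rw [hcard]; ring
    exact Nat.eq_of_mul_eq_mul_right (by norm_num) this
  · intro hdvd
    have h1 : q ∣ q ^ 2 - 1 := hm ▸ Dvd.dvd.mul_left hdvd 2
    have h2 : q ∣ q ^ 2 := dvd_pow_self q (by norm_num)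
    have := Nat.dvd_sub h2 h1
    rw [Nat.sub_sub_self (by omega)] at this
    have := Nat.le_of_dvd (by omega) this
    omega
  · omega

lemma fact_card (hq5 : 5 ≤ q) : (Nat.card (PSL q)).factorization q = 1 := by
  obtain ⟨m, hcard, hm, hqm, hm0⟩ := exists_m q hq5
  rw [hcard, Nat.factorization_mul (by omega) hm0]
  have h1 : (Nat.factorization q) q = 1 := by
    rw [(Fact.out (p := q.Prime)).factorization]
    simp
  have h2 : (Nat.factorization m) q = 0 := Nat.factorization_eq_zero_of_not_dvd hqm
  simp [h1, h2]

lemma q_dvd_card (hq5 : 5 ≤ q) : q ∣ Nat.card (PSL q) := by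
  obtain ⟨m, hcard, -, -, -⟩ := exists_m q hq5
  exact hcard ▸ Dvd.intro m rfl

/-- Any subgroup of order `q` of `PSL q` as a Sylow subgroup. -/
noncomputable def sylowOfCardQ (hq5 : 5 ≤ q) (A : Subgroup (PSL q)) (hA : Nat.card A = q) :
    Sylow q (PSL q) :=
  Sylow.ofCard A (by rw [hA, fact_card q hq5, pow_one])

lemma sylowOfCardQ_coe (hq5 : 5 ≤ q) (A : Subgroup (PSL q)) (hA : Nat.card A = q) :
    (sylowOfCardQ q hq5 A hA : Subgroup (PSL q)) = A :=
  Sylow.coe_ofCard A _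

lemma sylow_card (hq5 : 5 ≤ q) (P : Sylow q (PSL q)) : Nat.card P = q := by
  rw [P.card_eq_multiplicity, fact_card q hq5, pow_one]

/-- Weak simplicity: a normal subgroup of order divisible by `q` is everything. -/
lemma normal_eq_top (hq5 : 5 ≤ q) (K : Subgroup (PSL q)) (hK : K.Normal)
    (hdvd : q ∣ Nat.card K) : K = ⊤ := by
  obtain ⟨x, hx⟩ := exists_prime_orderOf_dvd_card' (G := K) q hdvd
  have hx' : orderOf ((x : PSL q)) = q :=
    (orderOf_injective K.subtype (Subgroup.subtype_injective K) x).trans hx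
  set Q : Subgroup (PSL q) := Subgroup.zpowers (x : PSL q) with hQdef
  have hQK : Q ≤ K := Subgroup.zpowers_le.mpr x.2
  have hQcard : Nat.card Q = q := by rw [hQdef, Nat.card_zpowers, hx']
  -- every subgroup of order q is contained in K
  have hall : ∀ A : Subgroup (PSL q), Nat.card A = q → A ≤ K := by
    intro A hA
    obtain ⟨g, hg⟩ := MulAction.exists_smul_eq (PSL q)
      (sylowOfCardQ q hq5 Q hQcard) (sylowOfCardQ q hq5 A hA)
    have hcoe : MulAut.conj g • Q = A := by
      have := congrArg (fun P : Sylow q (PSL q) => (P : Subgroup (PSL q))) hg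
      simpa [Sylow.coe_subgroup_smul, sylowOfCardQ_coe] using this
    rw [← hcoe]
    intro a ha
    rw [Subgroup.mem_pointwise_smul_iff_inv_smul_mem] at ha
    have : g⁻¹ * a * g ∈ K := hQK ha
    have h2 := hK.conj_mem _ this g
    simpa [mul_assoc] using h2
  have hU : Subgroup.zpowers (mk q (E q 1)) ≤ K := hall _ (card_U q)
  have hL : Subgroup.zpowers (mk q (Fl q 1)) ≤ K := hall _ (card_L q)
  have hEK : ∀ c : ZMod q, mk q (E q c) ∈ K := by
    intro c
    have : mk q (E q 1) ^ (c.val) ∈ Subgroup.zpowers (mk q (E q 1)) := by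
      exact Subgroup.npow_mem_zpowers _ _
    rw [← map_pow, E_pow] at this
    have hcv : ((c.val : ℕ) : ZMod q) = c := by simp [ZMod.natCast_val, ZMod.cast_id]
    rw [hcv] at this
    exact hU this
  have hFK : ∀ c : ZMod q, mk q (Fl q c) ∈ K := by
    intro c
    have : mk q (Fl q 1) ^ (c.val) ∈ Subgroup.zpowers (mk q (Fl q 1)) := by
      exact Subgroup.npow_mem_zpowers _ _
    rw [← map_pow, Fl_pow] at this
    have hcv : ((c.val : ℕ) : ZMod q) = c := by simp [ZMod.natCast_val, ZMod.cast_id]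
    rw [hcv] at this
    exact hL this
  rw [eq_top_iff]
  intro y _
  obtain ⟨w, rfl⟩ := mk_surj q y
  have hw : w ∈ Subgroup.closure (Set.range (E q) ∪ Set.range (Fl q)) := by
    rw [closure_EF]; trivial
  refine Subgroup.closure_induction ?_ ?_ ?_ ?_ hw
  · rintro s (⟨c, rfl⟩ | ⟨c, rfl⟩) <;> [exact hEK c; exact hFK c]
  · simpa using K.one_mem
  · intro s t _ _ hs ht
    rw [_root_.map_mul]
    exact K.mul_mem hs ht
  · intro s _ hs
    rw [_root_.map_inv]
    exact K.inv_mem hs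

lemma divisor_lemma (hq5 : 5 ≤ q) {n I : ℕ} (hI : 2 * I = q ^ 2 - 1) (hd : n ∣ I)
    (hmod : n ≡ 1 [MOD q]) (hn1 : n ≠ 1) : n = q + 1 := by
  have hq2 : 25 ≤ q ^ 2 := by nlinarith
  have hI0 : I ≠ 0 := by omega
  obtain ⟨t, ht⟩ := hd
  have hn0 : n ≠ 0 := by rintro rfl; simp at ht; omega
  have ht0 : t ≠ 0 := by rintro rfl; simp at ht; omega
  -- q ∣ n - 1
  have hdvd1 : q ∣ n - 1 := (Nat.modEq_iff_dvd' (by omega)).mp hmod.symm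
  obtain ⟨s, hs⟩ := hdvd1
  have hneq : n = q * s + 1 := by omega
  have hs0 : s ≠ 0 := by
    rintro rfl
    omega
  -- main equation without subtraction
  have heq : 2 * ((q * s + 1) * t) + 1 = q ^ 2 := by
    rw [← hneq, ← ht]
    omega
  -- q divides 2t + 1
  have hq2t : q ∣ 2 * t + 1 := by
    have h1 : q ∣ q ^ 2 := dvd_pow_self q (by norm_num)
    have h2 : q ^ 2 = q * (2 * s * t) + (2 * t + 1) := by rw [← heq]; ring
    rw [h2] at h1
    exact (Nat.dvd_add_right (Dvd.intro _ rfl)).mp h1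
  have h2t : q ≤ 2 * t + 1 := Nat.le_of_dvd (by omega) hq2t
  -- s = 1
  have hs1 : s = 1 := by
    by_contra hss
    have hs2 : 2 ≤ s := by omega
    have hA : 2 * q + 1 ≤ q * s + 1 := by nlinarith
    have hB : q - 1 ≤ 2 * t := by omega
    have hC : (2 * q + 1) * (q - 1) ≤ (q * s + 1) * (2 * t) := Nat.mul_le_mul hA hB
    zify [show 1 ≤ q by omega] at hC heq
    nlinarith [hC, heq]
  rw [hs1, mul_one] at hneq
  omega


end QAux

/-- Every proper subgroup of odd index in ,  prime, has index
divisible by . -/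
theorem q_dvd_odd_index_PSL (q : ℕ) (hq : Nat.Prime q) (hq5 : 5 ≤ q)
    (H : Subgroup (PSL q)) (hH : H ≠ ⊤) (hodd : Odd H.index) :
    q ∣ H.index := by
  haveI : Fact (Nat.Prime q) := ⟨hq⟩
  by_contra hndvd
  obtain ⟨m, hcard, hm, hqm, hm0⟩ := QAux.exists_m q hq5
  set k := H.index with hk
  have hk0 : k ≠ 0 := Subgroup.index_ne_zero_of_finite
  have hk1 : k ≠ 1 := fun h => hH (Subgroup.index_eq_one.mp h)
  have hHk : Nat.card H * k = Nat.card (PSL q) := Subgroup.card_mul_index H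
  have hH0 : Nat.card H ≠ 0 := Nat.card_pos.ne'
  -- q-part of |H| is exactly q
  have hfH : (Nat.card H).factorization q = 1 := by
    have := QAux.fact_card q hq5
    rw [← hHk, Nat.factorization_mul hH0 hk0] at this
    have hk' : (Nat.factorization k) q = 0 := Nat.factorization_eq_zero_of_not_dvd hndvd
    simpa [hk'] using this
  -- a Sylow q-subgroup of H
  obtain ⟨P₀⟩ : Nonempty (Sylow q H) := inferInstance
  have hP₀card : Nat.card P₀ = q := by
    rw [P₀.card_eq_multiplicity, hfH, pow_one]
  set P : Subgroup (PSL q) := (P₀ : Subgroup H).map H.subtype with hPdef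
  have hPcard : Nat.card P = q := by
    rw [hPdef, ← Nat.card_congr (Subgroup.equivMapOfInjective _ _
      (Subgroup.subtype_injective H)).toEquiv]
    exact hP₀card
  have hPH : P ≤ H := Subgroup.map_subtype_le _
  by_cases hsub : ∀ Q₀ : Sylow q H, Q₀ = P₀
  · -- unique Sylow in H : H normalizes P
    have hnorm : H ≤ Subgroup.normalizer (P : Set (PSL q)) := by
      intro g hg
      have claim : ∀ g' (hg' : g' ∈ H), ∀ y ∈ P, g' * y * g'⁻¹ ∈ P := by
        intro g' hg' y hy
        obtain ⟨y₀, hy₀, rfl⟩ := hy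
        have hsmul := hsub ((⟨g', hg'⟩ : H) • P₀)
        have hmem : (⟨g', hg'⟩ : H) * y₀ * (⟨g', hg'⟩ : H)⁻¹ ∈ (P₀ : Subgroup H) := by
          have hco : (P₀ : Subgroup H)
              = (((⟨g', hg'⟩ : H) • P₀ : Sylow q H) : Subgroup H) := by rw [hsmul]
          rw [hco, Sylow.coe_subgroup_smul]
          exact Subgroup.smul_mem_pointwise_smul _ _ _ hy₀
        exact ⟨_, hmem, rfl⟩
      rw [Subgroup.mem_normalizer_iff]
      intro y
      constructor
      · intro hy
        exact claim g hg y hy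
      · intro hy
        have := claim g⁻¹ (H.inv_mem hg) _ hy
        simpa [mul_assoc] using this
    -- count Sylow subgroups of PSL q
    set PG : Sylow q (PSL q) := QAux.sylowOfCardQ q hq5 P hPcard with hPG
    set n := Nat.card (Sylow q (PSL q)) with hn
    have hncard : n = (Subgroup.normalizer ((PG : Subgroup (PSL q)) : Set (PSL q))).index :=
      Sylow.card_eq_index_normalizer PG
    have hPindex : (PG : Subgroup (PSL q)).index = m := by
      have h1 : Nat.card (PG : Subgroup (PSL q)) * (PG : Subgroup (PSL q)).index
          = Nat.card (PSL q) := Subgroup.card_mul_index _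
      rw [QAux.sylowOfCardQ_coe] at h1 ⊢
      rw [hPcard, hcard] at h1
      exact Nat.eq_of_mul_eq_mul_left (by omega) h1
    have hdvdm : n ∣ m := hPindex ▸ Sylow.card_dvd_index PG
    have hmod : n ≡ 1 [MOD q] := card_sylow_modEq_one q (PSL q)
    have hne1 : n ≠ 1 := by
      intro h1
      have hsing : Subsingleton (Sylow q (PSL q)) :=
        Nat.card_eq_one_iff_unique.mp h1 |>.1
      have heq : QAux.sylowOfCardQ q hq5 _ (QAux.card_U q)
          = QAux.sylowOfCardQ q hq5 _ (QAux.card_L q) := Subsingleton.elim _ _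
      have := congrArg (fun s : Sylow q (PSL q) => (s : Subgroup (PSL q))) heq
      simp only [QAux.sylowOfCardQ_coe] at this
      exact QAux.U_ne_L q this
    have hnval : n = q + 1 := QAux.divisor_lemma q hq5 hm hdvdm hmod hne1
    -- 2 divides the index of H
    have hdvd2 : (Subgroup.normalizer ((PG : Subgroup (PSL q)) : Set (PSL q))).index ∣ k := by
      apply Subgroup.index_dvd_of_le
      rw [QAux.sylowOfCardQ_coe]
      exact hnorm
    rw [← hncard, hnval] at hdvd2
    have hq2 : q ≠ 2 := by omega
    have hoddq : Odd q := hq.odd_of_ne_two hq2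
    obtain ⟨j, hj⟩ := hoddq
    have h2k : 2 ∣ k := dvd_trans ⟨j + 1, by omega⟩ hdvd2
    obtain ⟨d, hd⟩ := hodd
    omega
  · -- two distinct Sylows in H
    push_neg at hsub
    obtain ⟨Q₀, hQ₀⟩ := hsub
    set Q : Subgroup (PSL q) := (Q₀ : Subgroup H).map H.subtype with hQdef
    have hQcard : Nat.card Q = q := by
      rw [hQdef, ← Nat.card_congr (Subgroup.equivMapOfInjective _ _
        (Subgroup.subtype_injective H)).toEquiv]
      rw [Q₀.card_eq_multiplicity, hfH, pow_one]
    have hQH : Q ≤ H := Subgroup.map_subtype_le _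
    have hPQ : P ≠ Q := by
      intro h
      apply hQ₀
      apply Sylow.ext
      exact Subgroup.map_injective (Subgroup.subtype_injective H) h.symm
    have hinf : P ⊓ Q = ⊥ := by
      have hle : Nat.card (P ⊓ Q : Subgroup (PSL q)) ∣ q := by
        have := Subgroup.card_dvd_of_le (inf_le_left (a := P) (b := Q))
        rwa [hPcard] at this
      rcases (Nat.Prime.eq_one_or_self_of_dvd hq _ hle) with h1 | hq'
      · exact Subgroup.card_eq_one.mp h1
      · exfalso
        have h1 : P ⊓ Q = P :=
          Subgroup.eq_of_le_of_card_ge inf_le_left (le_of_eq (by rw [hPcard, hq']))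
        have h2 : P ⊓ Q = Q :=
          Subgroup.eq_of_le_of_card_ge inf_le_right (le_of_eq (by rw [hQcard, hq']))
        exact hPQ (h1.symm.trans h2)
    -- |H| ≥ q^2
    have hinj : Function.Injective (fun z : P × Q => ((z.1 * z.2 : PSL q) : PSL q)) := by
      rintro ⟨p₁, s₁⟩ ⟨p₂, s₂⟩ hz
      simp only at hz
      have hmem : (p₂ : PSL q)⁻¹ * p₁ ∈ P ⊓ Q := by
        constructor
        · exact P.mul_mem (P.inv_mem p₂.2) p₁.2
        · have heq2 : (p₂ : PSL q)⁻¹ * p₁ = s₂ * s₁⁻¹ := by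
            calc (p₂ : PSL q)⁻¹ * p₁ = (p₂ : PSL q)⁻¹ * ((p₁ : PSL q) * s₁) * (s₁ : PSL q)⁻¹ := by
                  group
            _ = (p₂ : PSL q)⁻¹ * ((p₂ : PSL q) * s₂) * (s₁ : PSL q)⁻¹ := by rw [hz]
            _ = (s₂ : PSL q) * (s₁ : PSL q)⁻¹ := by group
          rw [heq2]
          exact Q.mul_mem s₂.2 (Q.inv_mem s₁.2)
      rw [hinf, Subgroup.mem_bot] at hmem
      have hp : (p₁ : PSL q) = p₂ := (inv_mul_eq_one.mp hmem).symm
      have hs : (s₁ : PSL q) = s₂ := by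
        rw [hp] at hz
        exact mul_left_cancel hz
      exact Prod.ext (Subtype.ext hp) (Subtype.ext hs)
    have hcardH : q * q ≤ Nat.card H := by
      have hinj' : Function.Injective (fun z : P × Q =>
          (⟨(z.1 : PSL q) * z.2, H.mul_mem (hPH z.1.2) (hQH z.2.2)⟩ : H)) := by
        intro z w hzw
        apply hinj
        simpa [Subtype.ext_iff] using hzw
      have := Nat.card_le_card_of_injective _ hinj'
      rwa [Nat.card_prod, hPcard, hQcard] at this
    -- index < q
    have hklt : k < q := by
      by_contra hge
      push_neg at hge
      have h1 : q * q * q ≤ Nat.card H * k := Nat.mul_le_mul hcardH hge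
      rw [hHk, hcard] at h1
      have h2 : 2 * m + 1 = q ^ 2 := by
        have : 1 ≤ q ^ 2 := by nlinarith
        omega
      nlinarith
    -- action on cosets
    have hker : q ∣ Nat.card (H.normalCore) := by
      have hsplit := Subgroup.card_eq_card_quotient_mul_card_subgroup
        (MulAction.toPermHom (PSL q) (PSL q ⧸ H)).ker
      have hrange : Nat.card ((PSL q) ⧸ (MulAction.toPermHom (PSL q) (PSL q ⧸ H)).ker)
          ∣ Nat.factorial k := by
        rw [Nat.card_congr (QuotientGroup.quotientKerEquivRange _).toEquiv]
        have h1 : Nat.card (MulAction.toPermHom (PSL q) (PSL q ⧸ H)).range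
            ∣ Nat.card (Equiv.Perm (PSL q ⧸ H)) := Subgroup.card_subgroup_dvd_card _
        haveI : Fintype (PSL q ⧸ H) := Fintype.ofFinite _
        haveI := Classical.decEq (PSL q ⧸ H)
        have h2 : Nat.card (Equiv.Perm (PSL q ⧸ H)) = Nat.factorial k := by
          rw [Nat.card_eq_fintype_card, Fintype.card_perm, ← Nat.card_eq_fintype_card]
          rw [hk, Subgroup.index_eq_card]
        rwa [h2] at h1
      have hqG : q ∣ Nat.card (PSL q) := QAux.q_dvd_card q hq5
      rw [hsplit] at hqG
      rcases hq.dvd_mul.mp hqG with h | h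
      · exfalso
        have : q ∣ Nat.factorial k := h.trans hrange
        rw [Nat.Prime.dvd_factorial hq] at this
        omega
      · rwa [Subgroup.normalCore_eq_ker]
    have htop : H.normalCore = ⊤ :=
      QAux.normal_eq_top q hq5 _ (Subgroup.normalCore_normal H) hker
    have : H = ⊤ := top_le_iff.mp (htop ▸ Subgroup.normalCore_le H)
    exact hH this
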